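/- Strong duality (dual part): assume S and T are both nonempty. If y* ∈ ℝ^q satisfies φ(y, y*) ≥ 0 for all y ∈ 𝒫 = P[S] + C, then y* ∈ 𝒟* = D*[T] - K. -/

import Mathlib

open Matrix

/-- The coupling function of geometric duality (dimension q+1, last coordinate plays
the role of the q-th coordinate). -/
def phiCoupling (q : ℕ) (c y ystar : Fin (q + 1) → ℝ) : ℝ :=
  (∑ i : Fin q, y i.castSucc * ystar i.castSucc)
    + y (Fin.last q) * (1 - ∑ i : Fin q, c i.castSucc * ystar i.castSucc)
    - ystar (Fin.last q)

open Finset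
section FarkasAux

variable {N M : ℕ}

variable {N M : ℕ}

def FIndep (g : Fin M → (Fin N → ℝ)) (t : Finset (Fin M)) : Prop :=
  ∀ u : Fin M → ℝ, (∀ i ∉ t, u i = 0) → ∑ i, u i • g i = 0 → u = 0

lemma carath (g : Fin M → (Fin N → ℝ)) (s : Finset (Fin M)) :
    ∀ v : Fin M → ℝ, 0 ≤ v → (∀ i ∉ s, v i = 0) →
    ∃ t ⊆ s, FIndep g t ∧ ∃ w : Fin M → ℝ, 0 ≤ w ∧ (∀ i ∉ t, w i = 0) ∧
      ∑ i, w i • g i = ∑ i, v i • g i := by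
  induction s using Finset.strongInductionOn with
  | _ s ih =>
    intro v hv hsupp
    by_cases hind : FIndep g s
    · exact ⟨s, subset_rfl, hind, v, hv, hsupp, rfl⟩
    · rw [FIndep] at hind
      push_neg at hind
      obtain ⟨u0, hu0s, hu0sum, hu0ne⟩ := hind
      obtain ⟨u, hus, husum, j, hj⟩ :
          ∃ u : Fin M → ℝ, (∀ i ∉ s, u i = 0) ∧ (∑ i, u i • g i) = 0 ∧ ∃ j, 0 < u j := by
        obtain ⟨j, hj⟩ : ∃ j, u0 j ≠ 0 := by
          by_contra h; push_neg at h; exact hu0ne (funext h)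
        rcases lt_or_gt_of_ne hj with h | h
        · refine ⟨-u0, fun i hi => by simp [hu0s i hi], ?_, j, by simpa using h⟩
          simp [Finset.sum_neg_distrib, hu0sum]
        · exact ⟨u0, hu0s, hu0sum, j, h⟩
      have hjs : j ∈ s := by
        by_contra h; rw [hus j h] at hj; exact lt_irrefl 0 hj
      have hne : (s.filter (fun i => 0 < u i)).Nonempty :=
        ⟨j, Finset.mem_filter.2 ⟨hjs, hj⟩⟩
      obtain ⟨i0, hi0mem, hi0min⟩ :=
        Finset.exists_min_image (s.filter (fun i => 0 < u i)) (fun i => v i / u i) hne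
      obtain ⟨hi0s, hi0pos⟩ := Finset.mem_filter.1 hi0mem
      set cc := v i0 / u i0 with hcc
      have hcc0 : 0 ≤ cc := div_nonneg (hv i0) hi0pos.le
      set w : Fin M → ℝ := fun i => v i - cc * u i with hw
      have hw0 : 0 ≤ w := by
        intro i
        by_cases hip : 0 < u i
        · have his : i ∈ s := by
            by_contra h; rw [hus i h] at hip; exact lt_irrefl 0 hip
          have h1 : cc ≤ v i / u i := hi0min i (Finset.mem_filter.2 ⟨his, hip⟩)
          have h2 : cc * u i ≤ v i := by
            rw [← div_mul_cancel₀ (v i) hip.ne']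
            exact mul_le_mul_of_nonneg_right h1 hip.le
          simp only [hw, Pi.zero_apply]
          linarith
        · push_neg at hip
          have h1 : cc * u i ≤ 0 := mul_nonpos_of_nonneg_of_nonpos hcc0 hip
          have h2 : (0:ℝ) ≤ v i := hv i
          simp only [hw, Pi.zero_apply]
          linarith
      have hwi0 : w i0 = 0 := by
        simp only [hw]
        rw [hcc, div_mul_cancel₀ _ hi0pos.ne']
        ring
      have hwsupp : ∀ i ∉ s.erase i0, w i = 0 := by
        intro i hi
        rw [Finset.mem_erase] at hi
        push_neg at hi
        by_cases h : i = i0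
        · rw [h]; exact hwi0
        · have hs' : i ∉ s := hi h
          simp only [hw]
          rw [hsupp i hs', hus i hs']
          ring
      have hsum : ∑ i, w i • g i = ∑ i, v i • g i := by
        simp only [hw, sub_smul, Finset.sum_sub_distrib]
        have : ∑ i, (cc * u i) • g i = cc • ∑ i, u i • g i := by
          rw [Finset.smul_sum]
          simp [smul_smul]
        rw [this, husum, smul_zero, sub_zero]
      obtain ⟨t, hts, htind, w', hw'0, hw's, hw'sum⟩ :=
        ih (s.erase i0) (Finset.erase_ssubset hi0s) w hw0 hwsupp
      exact ⟨t, hts.trans (Finset.erase_subset _ _), htind, w', hw'0, hw's,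
        hw'sum.trans hsum⟩

variable {N M : ℕ}



lemma piece_closed (g : Fin M → (Fin N → ℝ)) (t : Finset (Fin M)) (ht : FIndep g t) :
    IsClosed {x : Fin N → ℝ | ∃ w : Fin M → ℝ, 0 ≤ w ∧ (∀ i ∉ t, w i = 0) ∧
      x = ∑ i, w i • g i} := by
  classical
  let L1 : (Fin M → ℝ) →ₗ[ℝ] (Fin N → ℝ) :=
    { toFun := fun v => ∑ i, v i • g i
      map_add' := by intro a b; simp [add_smul, Finset.sum_add_distrib]
      map_smul' := by intro c a; simp [smul_smul, Finset.smul_sum] }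
  let L2 : (Fin M → ℝ) →ₗ[ℝ] (Fin M → ℝ) :=
    { toFun := fun v i => if i ∈ t then 0 else v i
      map_add' := by intro a b; funext i; by_cases h : i ∈ t <;> simp [h]
      map_smul' := by intro c a; funext i; by_cases h : i ∈ t <;> simp [h] }
  let L := L1.prod L2
  have hker : LinearMap.ker L = ⊥ := by
    rw [LinearMap.ker_eq_bot']
    intro v hv
    rw [LinearMap.prod_apply] at hv
    have h1 : L1 v = 0 := congrArg Prod.fst hv
    have h2 : L2 v = 0 := congrArg Prod.snd hv
    have hsup : ∀ i ∉ t, v i = 0 := by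
      intro i hi
      have := congrFun h2 i
      simpa [L2, hi] using this
    exact ht v hsup h1
  have hemb := LinearMap.isClosedEmbedding_of_injective (f := L) hker
  have hA : IsClosed {v : Fin M → ℝ | 0 ≤ v ∧ ∀ i ∉ t, v i = 0} := by
    have heq : {v : Fin M → ℝ | 0 ≤ v ∧ ∀ i ∉ t, v i = 0} =
        ⋂ i, ((fun v : Fin M → ℝ => v i) ⁻¹' (if i ∈ t then Set.Ici 0 else {0})) := by
      ext v
      simp only [Set.mem_iInter, Set.mem_preimage, Set.mem_setOf_eq]
      constructor
      · rintro ⟨h0, hs⟩ i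
        by_cases h : i ∈ t
        · simpa [h] using h0 i
        · simp [h, hs i h]
      · intro h
        constructor
        · intro i
          have := h i
          by_cases hh : i ∈ t
          · simpa [hh] using this
          · simp only [hh, if_false, Set.mem_singleton_iff] at this
            simp [this]
        · intro i hi
          have := h i
          simpa [hi] using this
    rw [heq]
    refine isClosed_iInter fun i => IsClosed.preimage (continuous_apply i) ?_
    split <;> [exact isClosed_Ici; exact isClosed_singleton]
  have himg : IsClosed (L '' {v : Fin M → ℝ | 0 ≤ v ∧ ∀ i ∉ t, v i = 0}) :=
    hemb.isClosedMap _ hA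
  have heq : {x : Fin N → ℝ | ∃ w : Fin M → ℝ, 0 ≤ w ∧ (∀ i ∉ t, w i = 0) ∧
      x = ∑ i, w i • g i} =
      (fun x : Fin N → ℝ => (x, (0 : Fin M → ℝ))) ⁻¹'
        (L '' {v : Fin M → ℝ | 0 ≤ v ∧ ∀ i ∉ t, v i = 0}) := by
    ext x
    simp only [Set.mem_setOf_eq, Set.mem_preimage, Set.mem_image]
    constructor
    · rintro ⟨w, hw0, hws, rfl⟩
      refine ⟨w, ⟨hw0, hws⟩, ?_⟩
      have hL2 : L2 w = 0 := by
        funext i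
        by_cases h : i ∈ t
        · simp [L2, h]
        · simp [L2, h, hws i h]
      simp only [L, LinearMap.prod_apply, Function.prod, hL2]
      rfl
    · rintro ⟨w, ⟨hw0, hws⟩, hL⟩
      refine ⟨w, hw0, hws, ?_⟩
      have := congrArg Prod.fst hL
      exact this.symm
  rw [heq]
  exact himg.preimage (continuous_id.prodMk continuous_const)

variable {N M : ℕ}



lemma cone_closed (g : Fin M → (Fin N → ℝ)) :
    IsClosed {x : Fin N → ℝ | ∃ v : Fin M → ℝ, 0 ≤ v ∧ x = ∑ i, v i • g i} := by
  have heq : {x : Fin N → ℝ | ∃ v : Fin M → ℝ, 0 ≤ v ∧ x = ∑ i, v i • g i} =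
      ⋃ t : {t : Finset (Fin M) // FIndep g t},
        {x : Fin N → ℝ | ∃ w : Fin M → ℝ, 0 ≤ w ∧ (∀ i ∉ t.1, w i = 0) ∧
          x = ∑ i, w i • g i} := by
    ext x
    simp only [Set.mem_setOf_eq, Set.mem_iUnion]
    constructor
    · rintro ⟨v, hv, rfl⟩
      obtain ⟨t, -, htind, w, hw0, hws, hwsum⟩ :=
        carath g Finset.univ v hv (fun i hi => absurd (Finset.mem_univ i) hi)
      exact ⟨⟨t, htind⟩, w, hw0, hws, hwsum.symm⟩
    · rintro ⟨t, w, hw0, -, rfl⟩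
      exact ⟨w, hw0, rfl⟩
  rw [heq]
  exact isClosed_iUnion_of_finite fun t => piece_closed g t.1 t.2

lemma farkas (g : Fin M → (Fin N → ℝ)) (d : Fin N → ℝ)
    (h : ∀ y : Fin N → ℝ, (∀ i, 0 ≤ g i ⬝ᵥ y) → 0 ≤ d ⬝ᵥ y) :
    ∃ v : Fin M → ℝ, 0 ≤ v ∧ d = ∑ i, v i • g i := by
  by_contra hcon
  set cone : Set (Fin N → ℝ) := {x | ∃ v : Fin M → ℝ, 0 ≤ v ∧ x = ∑ i, v i • g i} with hcone
  have hd : d ∉ cone := hcon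
  set E := EuclideanSpace ℝ (Fin N)
  let e : E ≃L[ℝ] (Fin N → ℝ) := EuclideanSpace.equiv (Fin N) ℝ
  let K : ConvexCone ℝ E :=
    { carrier := (⇑e) ⁻¹' cone
      smul_mem' := by
        rintro cc hc x ⟨v, hv, hx⟩
        refine ⟨cc • v, fun i => mul_nonneg hc.le (hv i), ?_⟩
        rw [_root_.map_smul, hx, Finset.smul_sum]
        simp [smul_smul]
      add_mem' := by
        rintro x ⟨v, hv, hx⟩ y ⟨v', hv', hy⟩
        refine ⟨v + v', fun i => add_nonneg (hv i) (hv' i), ?_⟩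
        rw [map_add, hx, hy, ← Finset.sum_add_distrib]
        simp [add_smul] }
  have hKne : ((K : Set E)).Nonempty := by
    refine ⟨0, 0, le_refl 0, ?_⟩
    simp
  have hKcl : IsClosed (K : Set E) := (cone_closed g).preimage e.continuous
  have hdK : e.symm d ∉ K := by
    intro hmem
    apply hd
    have : e (e.symm d) ∈ cone := hmem
    rwa [e.apply_symm_apply] at this
  obtain ⟨y, hy1, hy2⟩ :=
    ProperCone.hyperplane_separation' (⟨K.toPointedCone (by exact ⟨0, le_refl 0, by simp⟩), hKcl⟩ : ProperCone ℝ E) hdK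
  have hinner : ∀ z : Fin N → ℝ, @inner ℝ E _ (e.symm z) y = z ⬝ᵥ (e y) := by
    intro z
    rw [PiLp.inner_apply]
    simp only [RCLike.inner_apply, starRingEnd_apply, star_trivial]
    rw [dotProduct]; exact Finset.sum_congr rfl fun i _ => mul_comm _ _
  have hgy : ∀ i, 0 ≤ g i ⬝ᵥ e y := by
    intro i
    have hgmem : e.symm (g i) ∈ K := by
      show e (e.symm (g i)) ∈ cone
      rw [e.apply_symm_apply]
      refine ⟨Pi.single i 1, ?_, ?_⟩
      · intro j
        by_cases hji : j = i <;> simp [Pi.single_apply, hji]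
      · simp [Pi.single_apply, ite_smul]
    have := hy1 _ hgmem
    rwa [hinner] at this
  have hdy := h (e y) hgy
  rw [← hinner] at hdy
  have : @inner ℝ E _ y (e.symm d) < 0 := by rw [real_inner_comm]; exact hy2
  rw [real_inner_comm] at this
  linarith

end FarkasAux

lemma nonneg_slope {a r : ℝ} (h : ∀ t : ℝ, 0 ≤ t → 0 ≤ a + t * r) : 0 ≤ r := by
  by_contra hr
  push_neg at hr
  have h0 := h 0 le_rfl
  rw [zero_mul, add_zero] at h0
  have hrne : -r ≠ 0 := by linarith
  have ht := h ((a + 1) / (-r)) (div_nonneg (by linarith) (by linarith))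
  have hval : (a + 1) / (-r) * r = -(a + 1) := by
    rw [div_mul_eq_mul_div, div_eq_iff hrne]; ring
  rw [hval] at ht
  linarith

lemma affine_farkas {n m : ℕ} (B : Matrix (Fin m) (Fin n) ℝ) (b : Fin m → ℝ)
    (cv : Fin n → ℝ) (α : ℝ) (hne : ∃ x, b ≤ B.mulVec x)
    (hbound : ∀ x, b ≤ B.mulVec x → α ≤ cv ⬝ᵥ x) :
    ∃ u : Fin m → ℝ, 0 ≤ u ∧ Bᵀ.mulVec u = cv ∧ α ≤ b ⬝ᵥ u := by
  classical
  obtain ⟨x0, hx0⟩ := hne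
  set g : Fin (m+1) → (Fin (n+1) → ℝ) :=
    fun j => Fin.lastCases (Pi.single (Fin.last n) 1)
      (fun j' => Fin.snoc (fun i => B j' i) (-(b j'))) j with hg
  set d : Fin (n+1) → ℝ := Fin.snoc cv (-α) with hd
  have hsnoc_dot : ∀ (f : Fin n → ℝ) (a : ℝ) (y : Fin (n+1) → ℝ),
      (Fin.snoc f a : Fin (n+1) → ℝ) ⬝ᵥ y
        = (f ⬝ᵥ fun i => y i.castSucc) + a * y (Fin.last n) := by
    intro f a y
    rw [dotProduct, Fin.sum_univ_castSucc]
    simp [dotProduct, Fin.snoc_castSucc, Fin.snoc_last]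
  have key : ∀ y : Fin (n+1) → ℝ, (∀ i, 0 ≤ g i ⬝ᵥ y) → 0 ≤ d ⬝ᵥ y := by
    intro y hy
    set x : Fin n → ℝ := fun i => y i.castSucc with hx
    set t : ℝ := y (Fin.last n) with htdef
    have ht : 0 ≤ t := by
      have hlast := hy (Fin.last m)
      rw [hg] at hlast
      simp only [Fin.lastCases_last] at hlast
      have heq : Pi.single (Fin.last n) 1 ⬝ᵥ y = t := by
        simp [dotProduct, Pi.single_apply, htdef]
      rwa [heq] at hlast
    have hrows : ∀ j : Fin m, t * b j ≤ (B.mulVec x) j := by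
      intro j
      have hj := hy j.castSucc
      rw [hg] at hj
      simp only [Fin.lastCases_castSucc] at hj
      rw [hsnoc_dot, ← hx, ← htdef] at hj
      have hrw : (fun i => B j i) ⬝ᵥ x = B.mulVec x j := rfl
      rw [hrw] at hj
      linarith
    rw [hd, hsnoc_dot, ← hx, ← htdef]
    rcases eq_or_lt_of_le ht with hteq | htpos
    · -- t = 0 case
      rw [← hteq, mul_zero, add_zero]
      have hBx : ∀ j, 0 ≤ (B.mulVec x) j := by
        intro j
        have := hrows j
        rw [← hteq, zero_mul] at this
        exact this
      have hall : ∀ s : ℝ, 0 ≤ s → 0 ≤ (cv ⬝ᵥ x0 - α) + s * (cv ⬝ᵥ x) := by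
        intro s hs
        have hmem : b ≤ B.mulVec (x0 + s • x) := by
          intro j
          rw [Matrix.mulVec_add, Matrix.mulVec_smul]
          have h1 := hBx j
          have hb0 := hx0 j
          simp only [Pi.add_apply, Pi.smul_apply, smul_eq_mul]
          nlinarith
        have h2 := hbound _ hmem
        rw [dotProduct_add, dotProduct_smul] at h2
        simp only [smul_eq_mul] at h2
        linarith
      exact nonneg_slope hall
    · -- t > 0 case
      have hmem : b ≤ B.mulVec (t⁻¹ • x) := by
        intro j
        rw [Matrix.mulVec_smul]
        simp only [Pi.smul_apply, smul_eq_mul]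
        calc b j = t⁻¹ * (t * b j) := by field_simp
          _ ≤ t⁻¹ * (B.mulVec x) j :=
            mul_le_mul_of_nonneg_left (hrows j) (inv_nonneg.2 htpos.le)
      have h2 := hbound _ hmem
      rw [dotProduct_smul] at h2
      simp only [smul_eq_mul] at h2
      have h3 : t * α ≤ cv ⬝ᵥ x := by
        calc t * α ≤ t * (t⁻¹ * (cv ⬝ᵥ x)) :=
              mul_le_mul_of_nonneg_left h2 htpos.le
          _ = cv ⬝ᵥ x := by field_simp
      nlinarith
  obtain ⟨v, hv, hdv⟩ := farkas g d key
  refine ⟨fun j => v j.castSucc, fun j => hv j.castSucc, ?_, ?_⟩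
  · funext i
    have h1 := congrFun hdv i.castSucc
    rw [hd] at h1
    rw [Fin.snoc_castSucc] at h1
    rw [Finset.sum_apply, Fin.sum_univ_castSucc] at h1
    simp only [Pi.smul_apply, smul_eq_mul, hg, Fin.lastCases_castSucc, Fin.lastCases_last,
      Fin.snoc_castSucc, Pi.single_apply, (Fin.castSucc_lt_last i).ne, if_false,
      mul_zero, add_zero] at h1
    rw [Matrix.mulVec, dotProduct]
    rw [h1]
    apply Finset.sum_congr rfl
    intro j _
    rw [Matrix.transpose_apply, mul_comm]
  · have h1 := congrFun hdv (Fin.last n)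
    rw [hd] at h1
    rw [Fin.snoc_last] at h1
    rw [Finset.sum_apply, Fin.sum_univ_castSucc] at h1
    simp only [Pi.smul_apply, smul_eq_mul, hg, Fin.lastCases_castSucc, Fin.lastCases_last,
      Fin.snoc_last, Pi.single_apply, if_pos rfl, mul_one] at h1
    norm_num at h1
    have hvlast : (0:ℝ) ≤ v (Fin.last m) := hv (Fin.last m)
    rw [dotProduct]
    have hsum2 : ∑ i : Fin m, b i * v i.castSucc = ∑ x : Fin m, v x.castSucc * b x :=
      Finset.sum_congr rfl fun j _ => mul_comm _ _
    rw [hsum2]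
    linarith

/-- Strong duality, dual part: if φ(y, y*) ≥ 0 for all y ∈ 𝒫, then y* ∈ 𝒟*. -/
theorem strong_duality_dual
    (q n m p : ℕ)
    (B : Matrix (Fin m) (Fin n) ℝ) (b : Fin m → ℝ) (P : Matrix (Fin (q+1)) (Fin n) ℝ)
    (Y : Matrix (Fin (q+1)) (Fin p) ℝ)
    (C : Set (Fin (q+1) → ℝ))
    (hC : C = {y | ∃ lam : Fin p → ℝ, 0 ≤ lam ∧ y = Y.mulVec lam})
    (hCpointed : ∀ x ∈ C, -x ∈ C → x = 0)
    (c : Fin (q+1) → ℝ) (hc : c ∈ interior C) (hcq : c (Fin.last q) = 1)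
    (S : Set (Fin n → ℝ)) (hS : S = {x | b ≤ B.mulVec x}) (hSne : S.Nonempty)
    (UP : Set (Fin (q+1) → ℝ))
    (hUP : UP = {y | ∃ x ∈ S, ∃ k ∈ C, y = P.mulVec x + k})
    (T : Set ((Fin m → ℝ) × (Fin (q+1) → ℝ)))
    (hT : T = {uw | 0 ≤ uw.1 ∧ Bᵀ.mulVec uw.1 = Pᵀ.mulVec uw.2 ∧
      c ⬝ᵥ uw.2 = 1 ∧ 0 ≤ Yᵀ.mulVec uw.2})
    (hTne : T.Nonempty)
    (Dstar : Set (Fin (q+1) → ℝ))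
    (hDstar : Dstar = {d | ∃ uw ∈ T, ∃ k : ℝ, 0 ≤ k ∧
      d = Function.update uw.2 (Fin.last q) (b ⬝ᵥ uw.1) - k • (Pi.single (Fin.last q) 1 : Fin (q+1) → ℝ)})
    (ystar : Fin (q+1) → ℝ)
    (hystar : ∀ y ∈ UP, 0 ≤ phiCoupling q c y ystar) :
    ystar ∈ Dstar := by
  classical
  set w : Fin (q+1) → ℝ :=
    Function.update ystar (Fin.last q) (1 - ∑ i : Fin q, c i.castSucc * ystar i.castSucc)
    with hwdef
  have hwcast : ∀ i : Fin q, w i.castSucc = ystar i.castSucc := fun i =>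
    Function.update_of_ne (Fin.castSucc_lt_last i).ne _ _
  have hwlast : w (Fin.last q) = 1 - ∑ i : Fin q, c i.castSucc * ystar i.castSucc :=
    Function.update_self _ _ _
  -- φ(y, ystar) = w ⬝ᵥ y - ystar last
  have hphi : ∀ y : Fin (q+1) → ℝ, phiCoupling q c y ystar = w ⬝ᵥ y - ystar (Fin.last q) := by
    intro y
    rw [phiCoupling, dotProduct, Fin.sum_univ_castSucc, hwlast]
    have : ∀ i : Fin q, w i.castSucc * y i.castSucc = y i.castSucc * ystar i.castSucc := by
      intro i; rw [hwcast i, mul_comm]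
    rw [Finset.sum_congr rfl fun i _ => this i]
    ring
  have hUPle : ∀ y ∈ UP, ystar (Fin.last q) ≤ w ⬝ᵥ y := by
    intro y hy
    have := hystar y hy
    rw [hphi] at this
    linarith
  obtain ⟨x0, hx0⟩ := hSne
  have hC0 : (0 : Fin (q+1) → ℝ) ∈ C := by
    rw [hC]; exact ⟨0, le_refl 0, by simp⟩
  have hPS : ∀ x ∈ S, P.mulVec x ∈ UP := by
    intro x hx
    rw [hUP]
    exact ⟨x, hx, 0, hC0, by simp⟩
  have hCsmul : ∀ k ∈ C, ∀ t : ℝ, 0 ≤ t → t • k ∈ C := by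
    intro k hk t ht
    rw [hC] at hk ⊢
    obtain ⟨lam, hlam, rfl⟩ := hk
    exact ⟨t • lam, fun i => mul_nonneg ht (hlam i), (Matrix.mulVec_smul _ _ _).symm⟩
  have hwC : ∀ k ∈ C, 0 ≤ w ⬝ᵥ k := by
    intro k hk
    apply nonneg_slope (a := w ⬝ᵥ P.mulVec x0 - ystar (Fin.last q)) (r := w ⬝ᵥ k)
    intro t ht
    have hmem : P.mulVec x0 + t • k ∈ UP := by
      rw [hUP]
      exact ⟨x0, hx0, t • k, hCsmul k hk t ht, rfl⟩
    have := hUPle _ hmem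
    rw [dotProduct_add, dotProduct_smul] at this
    simp only [smul_eq_mul] at this
    linarith
  -- conditions for T
  have hYw : 0 ≤ Yᵀ.mulVec w := by
    intro j
    have hcol : Y.mulVec (Pi.single j 1) ∈ C := by
      rw [hC]
      refine ⟨Pi.single j 1, ?_, rfl⟩
      intro i; by_cases h : i = j <;> simp [Pi.single_apply, h]
    have := hwC _ hcol
    have heq : w ⬝ᵥ Y.mulVec (Pi.single j 1) = Yᵀ.mulVec w j := by
      rw [Matrix.dotProduct_mulVec, Matrix.mulVec_transpose]
      simp [Matrix.vecMul, dotProduct, Pi.single_apply]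
    rwa [heq] at this
  have hcw : c ⬝ᵥ w = 1 := by
    rw [dotProduct, Fin.sum_univ_castSucc, hwlast, hcq]
    have : ∀ i : Fin q, c i.castSucc * w i.castSucc = c i.castSucc * ystar i.castSucc := by
      intro i; rw [hwcast i]
    rw [Finset.sum_congr rfl fun i _ => this i]
    ring
  -- LP bound
  have hbound : ∀ x, b ≤ B.mulVec x → ystar (Fin.last q) ≤ (Pᵀ.mulVec w) ⬝ᵥ x := by
    intro x hx
    have hxS : x ∈ S := by rw [hS]; exact hx
    have := hUPle _ (hPS x hxS)
    rwa [Matrix.dotProduct_mulVec, ← Matrix.mulVec_transpose] at this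
  obtain ⟨u, hu0, huB, hub⟩ := affine_farkas B b (Pᵀ.mulVec w) (ystar (Fin.last q))
    ⟨x0, by rwa [hS] at hx0⟩ hbound
  have hT' : (u, w) ∈ T := by
    rw [hT]
    exact ⟨hu0, huB, hcw, hYw⟩
  rw [hDstar]
  refine ⟨(u, w), hT', b ⬝ᵥ u - ystar (Fin.last q), by linarith, ?_⟩
  funext i
  by_cases h : i = Fin.last q
  · subst h
    simp only [Pi.sub_apply, Function.update_self, Pi.smul_apply, Pi.single_eq_same,
      smul_eq_mul, mul_one]
    ring
  · simp only [Pi.sub_apply, Function.update_of_ne h, Pi.smul_apply,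
      Pi.single_eq_of_ne h, smul_eq_mul, mul_zero, sub_zero]
    rw [hwdef, Function.update_of_ne h]
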